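/- Upper semi-continuity of asymptotic entropy: if probability measures μ_i on a countable group converge pointwise to μ and the family {μ_i} is entropy-tight, then limsup_i h(μ_i) ≤ h(μ), where h(ν) = lim_n H(ν^{*n})/n is the asymptotic entropy. -/

import Mathlib

open Real Filter
open scoped ENNReal Pointwise

-- real negMulLog facts
lemma negMulLog_le_exp_neg_one {p : ℝ} (hp : 0 ≤ p) : negMulLog p ≤ exp (-1) := by
  rcases eq_or_lt_of_le hp with h | h
  · simp [← h, exp_pos (-1) |>.le]
  · have h1 : log (exp (-1) / p) ≤ exp (-1) / p - 1 :=
      Real.log_le_sub_one_of_pos (by positivity)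
    have h2 : log (exp (-1) / p) = -1 - log p := by
      rw [Real.log_div (exp_ne_zero _) (ne_of_gt h), Real.log_exp]
    have h3 : -log p ≤ exp (-1) / p := by linarith
    have := mul_le_mul_of_nonneg_left h3 h.le
    calc negMulLog p = p * (-log p) := by simp only [negMulLog]; ring
    _ ≤ p * (exp (-1) / p) := this
    _ = exp (-1) := by field_simp
lemma negMulLog_mono {a b : ℝ} (ha : 0 ≤ a) (hab : a ≤ b) (hb : b ≤ exp (-1)) :
    negMulLog a ≤ negMulLog b := by
  have hb1 : b ≤ 1 := hb.trans (by
    rw [Real.exp_le_one_iff]; norm_num)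
  rcases eq_or_lt_of_le ha with h | ha'
  · rw [← h, negMulLog_zero]; exact negMulLog_nonneg (h ▸ hab) hb1
  · have hbpos : 0 < b := lt_of_lt_of_le ha' hab
    have hlog : log b - log a ≤ b / a - 1 := by
      have := Real.log_le_sub_one_of_pos (show 0 < b / a by positivity)
      rwa [Real.log_div (ne_of_gt hbpos) (ne_of_gt ha')] at this
    have hlb : 1 ≤ -log b := by
      have : log b ≤ log (exp (-1)) := Real.log_le_log hbpos hb
      rw [Real.log_exp] at this; linarith
    have key : a * (-log a) ≤ a * (-log b) + (b - a) := by
      have := mul_le_mul_of_nonneg_left hlog ha'.le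
      have h2 : a * (b / a - 1) = b - a := by field_simp
      nlinarith
    have key2 : a * (-log b) + (b - a) ≤ b * (-log b) := by nlinarith
    calc negMulLog a = a * (-log a) := by simp only [negMulLog]; ring
    _ ≤ b * (-log b) := le_trans key key2
    _ = negMulLog b := by simp only [negMulLog]; ring
lemma negMulLog_add_le {a b : ℝ} (ha : 0 ≤ a) (hb : 0 ≤ b) (hab : a + b ≤ 1) :
    negMulLog (a + b) ≤ negMulLog a + negMulLog b := by
  rcases eq_or_lt_of_le ha with h | ha'
  · simp [← h]
  rcases eq_or_lt_of_le hb with h | hb'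
  · simp [← h]
  have h1 : -log (a + b) ≤ -log a := by
    have := Real.log_le_log ha' (le_add_of_nonneg_right hb); linarith
  have h2 : -log (a + b) ≤ -log b := by
    have := Real.log_le_log hb' (le_add_of_nonneg_left ha); linarith
  have := add_le_add (mul_le_mul_of_nonneg_left h1 ha) (mul_le_mul_of_nonneg_left h2 hb)
  calc negMulLog (a + b) = a * (-log (a+b)) + b * (-log (a+b)) := by simp only [negMulLog]; ring
  _ ≤ a * (-log a) + b * (-log b) := this
  _ = negMulLog a + negMulLog b := by simp only [negMulLog]; ring
lemma negMulLog_sum_le {X : Type*} (F : Finset X) (f : X → ℝ) (hf : ∀ x, 0 ≤ f x)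
    (h1 : ∑ x ∈ F, f x ≤ 1) : negMulLog (∑ x ∈ F, f x) ≤ ∑ x ∈ F, negMulLog (f x) := by
  induction F using Finset.cons_induction with
  | empty => simp
  | cons a F ha IH =>
    rw [Finset.sum_cons] at h1 ⊢
    rw [Finset.sum_cons]
    have hF : 0 ≤ ∑ x ∈ F, f x := Finset.sum_nonneg fun x _ => hf x
    calc negMulLog (f a + ∑ x ∈ F, f x) ≤ negMulLog (f a) + negMulLog (∑ x ∈ F, f x) :=
        negMulLog_add_le (hf a) hF h1
    _ ≤ negMulLog (f a) + ∑ x ∈ F, negMulLog (f x) := by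
        have := IH (by linarith [hf a]); linarith

-- ENNReal bridges
section Glue
variable {X : Type*}

lemma tsum_toReal_ofReal (f : X → ℝ) (hf : ∀ x, 0 ≤ f x) :
    ∑' x, f x = (∑' x, ENNReal.ofReal (f x)).toReal := by
  by_cases h : Summable f
  · rw [← ENNReal.ofReal_tsum_of_nonneg hf h, ENNReal.toReal_ofReal (tsum_nonneg hf)]
  · rw [tsum_eq_zero_of_not_summable h]
    have : ∑' x, ENNReal.ofReal (f x) = ∞ := by
      by_contra h'
      exact h (by simpa [ENNReal.toReal_ofReal (hf _)] using ENNReal.summable_toReal h')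
    simp [this]

lemma summable_iff_ofReal_tsum_ne_top (f : X → ℝ) (hf : ∀ x, 0 ≤ f x) :
    Summable f ↔ ∑' x, ENNReal.ofReal (f x) ≠ ∞ := by
  constructor
  · intro h
    rw [← ENNReal.ofReal_tsum_of_nonneg hf h]
    exact ENNReal.ofReal_ne_top
  · intro h'
    simpa [ENNReal.toReal_ofReal (hf _)] using ENNReal.summable_toReal h'

lemma hasSum_of_ofReal_tsum (f : X → ℝ) (hf : ∀ x, 0 ≤ f x) {c : ℝ} (hc : 0 ≤ c)
    (h : ∑' x, ENNReal.ofReal (f x) = ENNReal.ofReal c) : HasSum f c := by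
  have hs : Summable f := (summable_iff_ofReal_tsum_ne_top f hf).2 (h ▸ ENNReal.ofReal_ne_top)
  have : ∑' x, f x = c := by
    rw [tsum_toReal_ofReal f hf, h, ENNReal.toReal_ofReal hc]
  exact this ▸ hs.hasSum

end Glue

/-- A probability measure on a countable set, given by its mass function. -/
def IsProb {X : Type*} (μ : X → ℝ) : Prop := (∀ x, 0 ≤ μ x) ∧ HasSum μ 1

/-- Shannon entropy of a measure on a countable set. -/
noncomputable def entropy {X : Type*} (μ : X → ℝ) : ℝ := ∑' x, negMulLog (μ x)

/-- Entropy-tightness of a family of measures. -/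
def EntTight {ι X : Type*} (μ : ι → X → ℝ) : Prop :=
  ∀ ε > (0 : ℝ), ∃ K : Finset X, ∀ i,
    (∑' x, ((↑K : Set X)ᶜ).indicator (fun y => negMulLog (μ i y)) x) < ε

/-- Convolution of measures on a group. -/
noncomputable def conv {G : Type*} [Group G] (μ ν : G → ℝ) : G → ℝ :=
  fun z => ∑' x, μ x * ν (x⁻¹ * z)

/-- `n`-fold convolution power of a measure. -/
noncomputable def convPow {G : Type*} [Group G] [DecidableEq G] (μ : G → ℝ) : ℕ → G → ℝ
  | 0 => fun g => if g = 1 then 1 else 0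
  | n + 1 => conv μ (convPow μ n)

/-- The asymptotic entropy `h(μ) = lim_n H(μ^{*n})/n` of the random walk with step
distribution `μ` (written as a `limsup`, which equals the limit when it exists). -/
noncomputable def asympEnt {G : Type*} [Group G] [DecidableEq G] (μ : G → ℝ) : ℝ :=
  limsup (fun n : ℕ => entropy (convPow μ n) / n) atTop

namespace AsympUSC

noncomputable def mE {X : Type*} (μ : X → ℝ) : X → ℝ≥0∞ := fun x => ENNReal.ofReal (μ x)
noncomputable def eE {X : Type*} (μ : X → ℝ) : X → ℝ≥0∞ :=
  fun x => ENNReal.ofReal (negMulLog (μ x))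
noncomputable def HE {X : Type*} (μ : X → ℝ) : ℝ≥0∞ := ∑' x, eE μ x

variable {X : Type*}

lemma prob_summable {μ : X → ℝ} (h : IsProb μ) : Summable μ := h.2.summable
lemma prob_le_one {μ : X → ℝ} (h : IsProb μ) (x : X) : μ x ≤ 1 :=
  le_hasSum h.2 x fun j _ => h.1 j
lemma prob_nml_nonneg {μ : X → ℝ} (h : IsProb μ) (x : X) : 0 ≤ negMulLog (μ x) :=
  Real.negMulLog_nonneg (h.1 x) (prob_le_one h x)
lemma prob_tsum_mE {μ : X → ℝ} (h : IsProb μ) : ∑' x, mE μ x = 1 := by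
  rw [show (∑' x, mE μ x) = ∑' x, ENNReal.ofReal (μ x) from rfl, ← ENNReal.ofReal_tsum_of_nonneg h.1 (prob_summable h), h.2.tsum_eq, ENNReal.ofReal_one]
lemma entropy_eq_toReal {μ : X → ℝ} (h : IsProb μ) : entropy μ = (HE μ).toReal := by
  rw [entropy, HE]; exact tsum_toReal_ofReal _ fun x => prob_nml_nonneg h x
lemma entropy_nonneg {μ : X → ℝ} (h : IsProb μ) : 0 ≤ entropy μ :=
  tsum_nonneg fun x => prob_nml_nonneg h x
lemma summable_negMulLog_iff {μ : X → ℝ} (h : IsProb μ) :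
    Summable (fun x => negMulLog (μ x)) ↔ HE μ ≠ ∞ :=
  summable_iff_ofReal_tsum_ne_top _ fun x => prob_nml_nonneg h x

-- key pointwise subadditivity of negMulLog over a countable sum
lemma ofReal_negMulLog_tsum_le {f : X → ℝ} (hf : ∀ x, 0 ≤ f x) {s : ℝ} (hs : HasSum f s)
    (hs1 : s ≤ 1) :
    ENNReal.ofReal (negMulLog s) ≤ ∑' x, ENNReal.ofReal (negMulLog (f x)) := by
  by_cases htop : ∑' x, ENNReal.ofReal (negMulLog (f x)) = ∞
  · simp [htop]
  have hf1 : ∀ x, f x ≤ 1 := fun x => le_trans (le_hasSum hs x fun j _ => hf j) hs1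
  have hreal : negMulLog s ≤ (∑' x, ENNReal.ofReal (negMulLog (f x))).toReal := by
    have htend : Tendsto (fun F : Finset X => negMulLog (∑ x ∈ F, f x)) atTop
        (nhds (negMulLog s)) :=
      (Real.continuous_negMulLog.continuousAt).tendsto.comp hs
    refine le_of_tendsto htend (Eventually.of_forall fun F => ?_)
    have h1 : ∑ x ∈ F, f x ≤ 1 := le_trans (sum_le_hasSum F (fun x _ => hf x) hs) hs1
    refine le_trans (negMulLog_sum_le F f hf h1) ?_
    have : (∑ x ∈ F, negMulLog (f x)) =
        (∑ x ∈ F, ENNReal.ofReal (negMulLog (f x))).toReal := by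
      rw [ENNReal.toReal_sum (fun x _ => ENNReal.ofReal_ne_top)]
      exact Finset.sum_congr rfl fun x _ =>
        (ENNReal.toReal_ofReal (Real.negMulLog_nonneg (hf x) (hf1 x))).symm
    rw [this]
    exact ENNReal.toReal_mono htop (ENNReal.sum_le_tsum F)
  calc ENNReal.ofReal (negMulLog s)
      ≤ ENNReal.ofReal ((∑' x, ENNReal.ofReal (negMulLog (f x))).toReal) :=
        ENNReal.ofReal_le_ofReal hreal
  _ = _ := ENNReal.ofReal_toReal htop

end AsympUSC

namespace AsympUSC

variable {G : Type*} [Group G]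

lemma shear_tsum (F : G → G → ℝ≥0∞) :
    ∑' p : G × G, F p.1 (p.1⁻¹ * p.2) = ∑' p : G × G, F p.1 p.2 := by
  have := Equiv.tsum_eq (Equiv.prodShear (Equiv.refl G) fun x => Equiv.mulLeft x)
    (fun p : G × G => F p.1 (p.1⁻¹ * p.2))
  simp only [Equiv.prodShear_apply, Equiv.refl_apply, Equiv.coe_mulLeft,
    inv_mul_cancel_left] at this
  exact this.symm

lemma tsum_prod_mul (a b : G → ℝ≥0∞) :
    ∑' p : G × G, a p.1 * b p.2 = (∑' x, a x) * ∑' y, b y := by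
  rw [ENNReal.tsum_prod']
  simp_rw [ENNReal.tsum_mul_left]
  rw [ENNReal.tsum_mul_right]

lemma prod_expand (h : G → G → ℝ≥0∞) (φ : G → ℝ≥0∞) :
    ∑' z, φ z * ∑' x, h x (x⁻¹ * z) = ∑' p : G × G, φ (p.1 * p.2) * h p.1 p.2 := by
  calc ∑' z, φ z * ∑' x, h x (x⁻¹ * z) = ∑' z, ∑' x, φ z * h x (x⁻¹ * z) := by
        simp_rw [ENNReal.tsum_mul_left]
  _ = ∑' p : G × G, φ p.1 * h p.2 (p.2⁻¹ * p.1) :=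
        (ENNReal.tsum_prod' (f := fun p : G × G => φ p.1 * h p.2 (p.2⁻¹ * p.1))).symm
  _ = ∑' p : G × G, φ p.2 * h p.1 (p.1⁻¹ * p.2) := by
        have := Equiv.tsum_eq (Equiv.prodComm G G)
          (fun p : G × G => φ p.2 * h p.1 (p.1⁻¹ * p.2))
        simp only [Equiv.prodComm_apply, Prod.fst_swap, Prod.snd_swap] at this
        exact this
  _ = ∑' p : G × G, φ (p.1 * p.2) * h p.1 p.2 := by
        have := shear_tsum (fun x y => φ (x * y) * h x y)
        simp only [mul_inv_cancel_left] at this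
        exact this

variable {μ lam ρ : G → ℝ}

lemma conv_slice_summable (hμ : IsProb μ) (hl : IsProb lam) (z : G) :
    Summable fun x => μ x * lam (x⁻¹ * z) := by
  refine Summable.of_nonneg_of_le (fun x => mul_nonneg (hμ.1 x) (hl.1 _)) (fun x => ?_)
    (prob_summable hμ)
  exact mul_le_of_le_one_right (hμ.1 x) (prob_le_one hl _)

lemma conv_nonneg (hμ : IsProb μ) (hl : IsProb lam) (z : G) : 0 ≤ conv μ lam z :=
  tsum_nonneg fun x => mul_nonneg (hμ.1 x) (hl.1 _)

lemma mE_conv (hμ : IsProb μ) (hl : IsProb lam) (z : G) :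
    mE (conv μ lam) z = ∑' x, mE μ x * mE lam (x⁻¹ * z) := by
  show ENNReal.ofReal (conv μ lam z) = _
  rw [conv, ENNReal.ofReal_tsum_of_nonneg (fun x => mul_nonneg (hμ.1 x) (hl.1 _))
    (conv_slice_summable hμ hl z)]
  exact tsum_congr fun x => ENNReal.ofReal_mul (hμ.1 x)

lemma tsum_mE_conv (hμ : IsProb μ) (hl : IsProb lam) : ∑' z, mE (conv μ lam) z = 1 := by
  calc ∑' z, mE (conv μ lam) z = ∑' z, (1 : ℝ≥0∞) * ∑' x, mE μ x * mE lam (x⁻¹ * z) := by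
        simp_rw [one_mul]; exact tsum_congr fun z => mE_conv hμ hl z
  _ = ∑' p : G × G, (1 : ℝ≥0∞) * (mE μ p.1 * mE lam p.2) :=
        prod_expand (fun x y => mE μ x * mE lam y) (fun _ => 1)
  _ = (∑' x, mE μ x) * ∑' y, mE lam y := by simp_rw [one_mul]; exact tsum_prod_mul _ _
  _ = 1 := by rw [prob_tsum_mE hμ, prob_tsum_mE hl, one_mul]

lemma conv_isProb (hμ : IsProb μ) (hl : IsProb lam) : IsProb (conv μ lam) := by
  refine ⟨conv_nonneg hμ hl, hasSum_of_ofReal_tsum _ (conv_nonneg hμ hl) zero_le_one ?_⟩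
  rw [ENNReal.ofReal_one]
  exact tsum_mE_conv hμ hl

lemma eE_conv_le (hμ : IsProb μ) (hl : IsProb lam) (z : G) :
    eE (conv μ lam) z ≤ ∑' x, ENNReal.ofReal (negMulLog (μ x * lam (x⁻¹ * z))) := by
  refine ofReal_negMulLog_tsum_le (fun x => mul_nonneg (hμ.1 x) (hl.1 _))
    ((conv_slice_summable hμ hl z).hasSum) ?_
  exact prob_le_one (conv_isProb hμ hl) z

lemma tsum_eE_prod (hμ : IsProb μ) (hl : IsProb lam) :
    ∑' p : G × G, ENNReal.ofReal (negMulLog (μ p.1 * lam p.2)) = HE μ + HE lam := by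
  have hpt : ∀ p : G × G, ENNReal.ofReal (negMulLog (μ p.1 * lam p.2)) =
      mE lam p.2 * eE μ p.1 + mE μ p.1 * eE lam p.2 := by
    intro p
    rw [negMulLog_mul, ENNReal.ofReal_add (mul_nonneg (hl.1 _) (prob_nml_nonneg hμ _))
      (mul_nonneg (hμ.1 _) (prob_nml_nonneg hl _)), ENNReal.ofReal_mul (hl.1 _),
      ENNReal.ofReal_mul (hμ.1 _)]
    rfl
  rw [tsum_congr hpt, ENNReal.tsum_add]
  have h1 : ∑' p : G × G, mE lam p.2 * eE μ p.1 = HE μ := by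
    have : ∀ p : G × G, mE lam p.2 * eE μ p.1 = eE μ p.1 * mE lam p.2 := fun p => mul_comm _ _
    rw [tsum_congr this, tsum_prod_mul, prob_tsum_mE hl, mul_one]; rfl
  have h2 : ∑' p : G × G, mE μ p.1 * eE lam p.2 = HE lam := by
    rw [tsum_prod_mul, prob_tsum_mE hμ, one_mul]; rfl
  rw [h1, h2]

lemma HE_conv_le (hμ : IsProb μ) (hl : IsProb lam) : HE (conv μ lam) ≤ HE μ + HE lam := by
  calc HE (conv μ lam) = ∑' z, eE (conv μ lam) z := rfl
  _ ≤ ∑' z, (1 : ℝ≥0∞) * ∑' x, ENNReal.ofReal (negMulLog (μ x * lam (x⁻¹ * z))) := by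
      refine ENNReal.tsum_le_tsum fun z => ?_
      rw [one_mul]; exact eE_conv_le hμ hl z
  _ = ∑' p : G × G, (1:ℝ≥0∞) * ENNReal.ofReal (negMulLog (μ p.1 * lam p.2)) :=
      prod_expand (fun x y => ENNReal.ofReal (negMulLog (μ x * lam y))) (fun _ => 1)
  _ = HE μ + HE lam := by simp_rw [one_mul]; exact tsum_eE_prod hμ hl

end AsympUSC

namespace AsympUSC

variable {G : Type*} [Group G] {μ lam ρ : G → ℝ}

lemma mE_eq_iff {f g : G → ℝ} (hf : ∀ x, 0 ≤ f x) (hg : ∀ x, 0 ≤ g x)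
    (h : ∀ z, mE f z = mE g z) : f = g := by
  funext z
  have := h z
  rwa [show mE f z = ENNReal.ofReal (f z) from rfl,
    show mE g z = ENNReal.ofReal (g z) from rfl,
    ENNReal.ofReal_eq_ofReal_iff (hf z) (hg z)] at this

lemma conv_assoc (hμ : IsProb μ) (hl : IsProb lam) (hρ : IsProb ρ) :
    conv (conv μ lam) ρ = conv μ (conv lam ρ) := by
  have h1 := conv_isProb hμ hl
  have h2 := conv_isProb hl hρ
  refine mE_eq_iff (conv_nonneg h1 hρ) (conv_nonneg hμ h2) fun z => ?_
  calc mE (conv (conv μ lam) ρ) z = ∑' x, mE (conv μ lam) x * mE ρ (x⁻¹ * z) :=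
        mE_conv h1 hρ z
  _ = ∑' x, ∑' w, mE μ w * mE lam (w⁻¹ * x) * mE ρ (x⁻¹ * z) := by
      refine tsum_congr fun x => ?_
      rw [mE_conv hμ hl x, ENNReal.tsum_mul_right]
  _ = ∑' w, ∑' x, mE μ w * mE lam (w⁻¹ * x) * mE ρ (x⁻¹ * z) := ENNReal.tsum_comm
  _ = ∑' w, mE μ w * ∑' x, mE lam (w⁻¹ * x) * mE ρ (x⁻¹ * z) := by
      refine tsum_congr fun w => ?_
      rw [← ENNReal.tsum_mul_left]
      exact tsum_congr fun x => by ring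
  _ = ∑' w, mE μ w * mE (conv lam ρ) (w⁻¹ * z) := by
      refine tsum_congr fun w => ?_
      congr 1
      rw [mE_conv hl hρ]
      have := Equiv.tsum_eq (Equiv.mulLeft w)
        (fun x => mE lam (w⁻¹ * x) * mE ρ (x⁻¹ * z))
      simp only [Equiv.coe_mulLeft, inv_mul_cancel_left, mul_inv_rev] at this
      rw [← this]
      exact tsum_congr fun y => by rw [mul_assoc]
  _ = mE (conv μ (conv lam ρ)) z := (mE_conv hμ h2 z).symm

lemma convPow_isProb [DecidableEq G] (hμ : IsProb μ) : ∀ n, IsProb (convPow μ n)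
  | 0 => ⟨fun x => by by_cases h : x = 1 <;> simp [convPow, h],
      by simpa [convPow] using hasSum_ite_eq (1 : G) (1 : ℝ)⟩
  | n + 1 => conv_isProb hμ (convPow_isProb hμ n)

lemma conv_delta [DecidableEq G] (hμ : IsProb μ) : conv μ (convPow μ 0) = μ := by
  funext z
  have hpt : ∀ x : G, μ x * convPow μ 0 (x⁻¹ * z) = if x = z then μ z else 0 := by
    intro x
    by_cases h : x = z
    · subst h; simp [convPow]
    · have hne : x⁻¹ * z ≠ 1 := fun hc => h (inv_mul_eq_one.mp hc)
      simp [convPow, hne, h]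
  show (∑' x, μ x * convPow μ 0 (x⁻¹ * z)) = μ z
  rw [tsum_congr hpt, tsum_eq_single z (fun x hx => if_neg hx), if_pos rfl]

lemma delta_conv [DecidableEq G] (hρ : IsProb ρ) : conv (convPow μ 0) ρ = ρ := by
  funext z
  have hpt : ∀ x : G, convPow μ 0 x * ρ (x⁻¹ * z) = if x = 1 then ρ z else 0 := by
    intro x
    by_cases h : x = 1
    · subst h; simp [convPow]
    · simp [convPow, h]
  show (∑' x, convPow μ 0 x * ρ (x⁻¹ * z)) = ρ z
  rw [tsum_congr hpt, tsum_eq_single 1 (fun x hx => if_neg hx), if_pos rfl]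

lemma convPow_one [DecidableEq G] (hμ : IsProb μ) : convPow μ 1 = μ := by
  show conv μ (convPow μ 0) = μ
  exact conv_delta hμ

lemma convPow_add [DecidableEq G] (hμ : IsProb μ) (m n : ℕ) :
    convPow μ (m + n) = conv (convPow μ m) (convPow μ n) := by
  induction m with
  | zero => rw [zero_add, delta_conv (convPow_isProb hμ n)]
  | succ m IH =>
    have : m + 1 + n = (m + n) + 1 := by ring
    rw [this]
    show conv μ (convPow μ (m + n)) = _
    rw [IH]
    rw [← conv_assoc hμ (convPow_isProb hμ m) (convPow_isProb hμ n)]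
    rfl

lemma HE_delta [DecidableEq G] : HE (convPow μ 0) = 0 := by
  rw [show HE (convPow μ 0) = ∑' x, eE (convPow μ 0) x from rfl]
  refine ENNReal.summable.tsum_eq_zero_iff.2 fun x => ?_
  show ENNReal.ofReal (negMulLog (convPow μ 0 x)) = 0
  by_cases h : x = 1 <;> simp [convPow, h]

lemma HE_convPow_ne_top [DecidableEq G] (hμ : IsProb μ) (h : HE μ ≠ ∞) (n : ℕ) :
    HE (convPow μ n) ≠ ∞ := by
  induction n with
  | zero => rw [HE_delta]; exact ENNReal.zero_ne_top
  | succ n IH =>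
    have := HE_conv_le hμ (convPow_isProb hμ n)
    exact ne_top_of_le_ne_top (by simp [h, IH, ENNReal.add_ne_top]) this

end AsympUSC

namespace AsympUSC

variable {G : Type*} [Group G] {μ lam ρ : G → ℝ}

lemma exists_pos (hμ : IsProb μ) : ∃ x, 0 < μ x := by
  by_contra h
  push_neg at h
  have hz : μ = fun _ => (0:ℝ) := funext fun x => le_antisymm (h x) (hμ.1 x)
  have := hμ.2
  rw [hz] at this
  exact one_ne_zero (this.unique hasSum_zero)

lemma HE_conv_top (hμ : IsProb μ) (hρ : IsProb ρ) (h : HE ρ = ∞) :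
    HE (conv μ ρ) = ∞ := by
  obtain ⟨x₀, hx₀⟩ := exists_pos hμ
  have htot : ∑' z, mE (conv μ ρ) z ≠ ∞ := by
    rw [tsum_mE_conv hμ hρ]; exact ENNReal.one_ne_top
  set E : Set G := {z : G | ENNReal.ofReal (exp (-1)) ≤ mE (conv μ ρ) z} with hE
  have hEfin : E.Finite :=
    ENNReal.finite_const_le_of_tsum_ne_top htot (ENNReal.ofReal_pos.2 (exp_pos _)).ne'
  have key : ∀ z ∉ E, ENNReal.ofReal (μ x₀) * eE ρ (x₀⁻¹ * z) ≤ eE (conv μ ρ) z := by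
    intro z hz
    have hlt : conv μ ρ z < exp (-1) := by
      have : mE (conv μ ρ) z < ENNReal.ofReal (exp (-1)) := lt_of_not_ge fun hle => hz hle
      rwa [show mE (conv μ ρ) z = ENNReal.ofReal (conv μ ρ z) from rfl,
        ENNReal.ofReal_lt_ofReal_iff_of_nonneg (conv_nonneg hμ hρ z)] at this
    have hslice : μ x₀ * ρ (x₀⁻¹ * z) ≤ conv μ ρ z :=
      Summable.le_tsum (conv_slice_summable hμ hρ z) x₀ fun j _ => mul_nonneg (hμ.1 j) (hρ.1 _)
    have h1 : μ x₀ * negMulLog (ρ (x₀⁻¹ * z)) ≤ negMulLog (μ x₀ * ρ (x₀⁻¹ * z)) := by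
      rw [negMulLog_mul]
      have := mul_nonneg (hρ.1 (x₀⁻¹ * z))
        (Real.negMulLog_nonneg (hμ.1 x₀) (prob_le_one hμ x₀))
      linarith
    have h2 : negMulLog (μ x₀ * ρ (x₀⁻¹ * z)) ≤ negMulLog (conv μ ρ z) :=
      negMulLog_mono (mul_nonneg (hμ.1 x₀) (hρ.1 _)) hslice hlt.le
    calc ENNReal.ofReal (μ x₀) * eE ρ (x₀⁻¹ * z)
        = ENNReal.ofReal (μ x₀ * negMulLog (ρ (x₀⁻¹ * z))) :=
          (ENNReal.ofReal_mul (hμ.1 x₀)).symm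
    _ ≤ ENNReal.ofReal (negMulLog (conv μ ρ z)) :=
          ENNReal.ofReal_le_ofReal (le_trans h1 h2)
    _ = eE (conv μ ρ) z := rfl
  have h1 : ∑' z, eE ρ (x₀⁻¹ * z) = ∞ := by
    have := Equiv.tsum_eq (Equiv.mulLeft x₀⁻¹) (eE ρ)
    simp only [Equiv.coe_mulLeft] at this
    rw [this]; exact h
  have hEsum : ∑' z, (E.indicator fun z => eE ρ (x₀⁻¹ * z)) z ≠ ∞ := by
    rw [tsum_eq_sum (s := hEfin.toFinset)
      (fun b hb => Set.indicator_of_notMem (fun hbE => hb (hEfin.mem_toFinset.2 hbE)) _)]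
    refine ((ENNReal.sum_lt_top).2 fun a _ => ?_).ne
    exact lt_of_le_of_lt (Set.indicator_le_self _ _ a) ENNReal.ofReal_lt_top
  have htail : ∑' z, (Eᶜ.indicator fun z => eE ρ (x₀⁻¹ * z)) z = ∞ := by
    by_contra hc
    have hsplit : ∑' z, eE ρ (x₀⁻¹ * z) =
        ∑' z, ((E.indicator fun z => eE ρ (x₀⁻¹ * z)) z
          + (Eᶜ.indicator fun z => eE ρ (x₀⁻¹ * z)) z) :=
      tsum_congr fun z => by
        by_cases hz : z ∈ E <;>
          simp [Set.indicator_of_mem, Set.indicator_of_notMem, hz]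
    rw [hsplit, ENNReal.tsum_add] at h1
    exact (ENNReal.add_ne_top.2 ⟨hEsum, hc⟩) h1
  rw [← top_le_iff]
  calc (⊤ : ℝ≥0∞) = ENNReal.ofReal (μ x₀) * ∑' z, (Eᶜ.indicator fun z => eE ρ (x₀⁻¹ * z)) z := by
        rw [htail, ENNReal.mul_top (ENNReal.ofReal_pos.2 hx₀).ne']
  _ = ∑' z, ENNReal.ofReal (μ x₀) * (Eᶜ.indicator fun z => eE ρ (x₀⁻¹ * z)) z :=
        ENNReal.tsum_mul_left.symm
  _ ≤ ∑' z, eE (conv μ ρ) z := by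
        refine ENNReal.tsum_le_tsum fun z => ?_
        by_cases hz : z ∈ E
        · rw [Set.indicator_of_notMem (Set.notMem_compl_iff.mpr hz)]
          simp
        · rw [Set.indicator_of_mem (Set.mem_compl hz)]
          exact key z hz
  _ = HE (conv μ ρ) := rfl

lemma HE_convPow_top [DecidableEq G] (hμ : IsProb μ) (h : HE μ = ∞) :
    ∀ n : ℕ, HE (convPow μ (n + 1)) = ∞
  | 0 => by rw [convPow_one hμ]; exact h
  | n + 1 => HE_conv_top hμ (convPow_isProb hμ (n + 1)) (HE_convPow_top hμ h n)

lemma asympEnt_eq_zero_of_top [DecidableEq G] (hμ : IsProb μ) (h : HE μ = ∞) :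
    asympEnt μ = 0 := by
  have hz : ∀ n : ℕ, entropy (convPow μ n) = 0 := by
    intro n
    cases n with
    | zero => rw [entropy_eq_toReal (convPow_isProb hμ 0), HE_delta]; simp
    | succ n => rw [entropy_eq_toReal (convPow_isProb hμ (n+1)), HE_convPow_top hμ h n]; simp
  have : (fun n : ℕ => entropy (convPow μ n) / n) = fun _ => (0:ℝ) := by
    funext n; rw [hz n, zero_div]
  rw [asympEnt, this, limsup_const]

lemma entropy_conv_le (hμ : IsProb μ) (hl : IsProb lam) (h1 : HE μ ≠ ∞) (h2 : HE lam ≠ ∞) :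
    entropy (conv μ lam) ≤ entropy μ + entropy lam := by
  rw [entropy_eq_toReal (conv_isProb hμ hl), entropy_eq_toReal hμ, entropy_eq_toReal hl,
    ← ENNReal.toReal_add h1 h2]
  exact ENNReal.toReal_mono (ENNReal.add_ne_top.2 ⟨h1, h2⟩) (HE_conv_le hμ hl)

lemma fekete [DecidableEq G] (hμ : IsProb μ) (hfin : HE μ ≠ ∞) :
    Tendsto (fun n : ℕ => entropy (convPow μ n) / n) atTop (nhds (asympEnt μ)) ∧
    ∀ N : ℕ, N ≠ 0 → asympEnt μ ≤ entropy (convPow μ N) / N := by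
  have hsub : Subadditive fun n => entropy (convPow μ n) := by
    intro m n
    show entropy (convPow μ (m + n)) ≤ entropy (convPow μ m) + entropy (convPow μ n)
    rw [convPow_add hμ m n]
    exact entropy_conv_le (convPow_isProb hμ m) (convPow_isProb hμ n)
      (HE_convPow_ne_top hμ hfin m) (HE_convPow_ne_top hμ hfin n)
  have hbdd : BddBelow (Set.range fun n : ℕ => entropy (convPow μ n) / n) := by
    refine ⟨0, fun x hx => ?_⟩
    obtain ⟨n, rfl⟩ := hx
    exact div_nonneg (entropy_nonneg (convPow_isProb hμ n)) (Nat.cast_nonneg n)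
  have ht := hsub.tendsto_lim hbdd
  have heq : asympEnt μ = hsub.lim := ht.limsup_eq
  exact ⟨heq ▸ ht, fun N hN => heq ▸ hsub.lim_le_div hbdd hN⟩

lemma asympEnt_nonneg [DecidableEq G] (hμ : IsProb μ) : 0 ≤ asympEnt μ := by
  have hf : ∀ n : ℕ, 0 ≤ entropy (convPow μ n) / n := fun n =>
    div_nonneg (entropy_nonneg (convPow_isProb hμ n)) (Nat.cast_nonneg n)
  by_cases hb : IsBoundedUnder (· ≤ ·) atTop fun n : ℕ => entropy (convPow μ n) / n
  · exact le_limsup_of_frequently_le (Frequently.of_forall hf) hb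
  · rw [asympEnt, limsup_eq]
    have hempty : {a : ℝ | ∀ᶠ n : ℕ in atTop, entropy (convPow μ n) / n ≤ a} = ∅ := by
      ext a
      simp only [Set.mem_setOf_eq, Set.mem_empty_iff_false, iff_false]
      exact fun h => hb ⟨a, eventually_map.mpr h⟩
    rw [hempty, Real.sInf_empty]

lemma asympEnt_le_div [DecidableEq G] (hμ : IsProb μ) {N : ℕ} (hN : N ≠ 0) :
    asympEnt μ ≤ entropy (convPow μ N) / N := by
  by_cases hfin : HE μ = ∞
  · rw [asympEnt_eq_zero_of_top hμ hfin]
    exact div_nonneg (entropy_nonneg (convPow_isProb hμ N)) (Nat.cast_nonneg N)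
  · exact (fekete hμ hfin).2 N hN

end AsympUSC

namespace AsympUSC

open scoped Pointwise

variable {G : Type*} [Group G] {μ lam ρ : G → ℝ}

noncomputable def tailE (μ : G → ℝ) (K : Finset G) : ℝ≥0∞ :=
  ∑' x, ((↑K : Set G)ᶜ).indicator (eE μ) x
noncomputable def tailM (μ : G → ℝ) (K : Finset G) : ℝ≥0∞ :=
  ∑' x, ((↑K : Set G)ᶜ).indicator (mE μ) x

lemma ind_mul (A : Set G) (f : G → ℝ≥0∞) (x : G) :
    A.indicator f x = A.indicator (fun _ => (1:ℝ≥0∞)) x * f x := by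
  by_cases hx : x ∈ A <;> simp [hx]

lemma tsum_split (f : G → ℝ≥0∞) (K : Finset G) :
    ∑' x, f x = (∑ x ∈ K, f x) + ∑' x, ((↑K : Set G)ᶜ).indicator f x := by
  have h1 : ∑' x, f x =
      ∑' x, ((↑K : Set G).indicator f x + ((↑K : Set G))ᶜ.indicator f x) :=
    tsum_congr fun x => by by_cases hx : x ∈ (↑K : Set G) <;> simp [hx]
  rw [h1, ENNReal.tsum_add]
  congr 1
  rw [tsum_eq_sum (s := K) (fun b hb => Set.indicator_of_notMem (by simpa using hb) _)]
  exact Finset.sum_congr rfl fun x hx => Set.indicator_of_mem (by simpa using hx) _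

lemma tailE_le_HE (μ : G → ℝ) (K : Finset G) : tailE μ K ≤ HE μ :=
  ENNReal.tsum_le_tsum fun x => Set.indicator_le_self _ _ x

lemma chi_mul_le [DecidableEq G] (K₁ K₂ : Finset G) (x y : G) :
    ((↑(K₁ * K₂) : Set G))ᶜ.indicator (fun _ => (1:ℝ≥0∞)) (x * y) ≤
      ((↑K₁ : Set G))ᶜ.indicator (fun _ => (1:ℝ≥0∞)) x
        + ((↑K₂ : Set G))ᶜ.indicator (fun _ => (1:ℝ≥0∞)) y := by
  by_cases hxy : x * y ∈ (↑(K₁ * K₂) : Set G)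
  · rw [Set.indicator_of_notMem (by simpa using hxy)]
    exact zero_le
  · have h : x ∉ K₁ ∨ y ∉ K₂ := by
      by_contra hc
      push_neg at hc
      exact hxy (Finset.mem_coe.mpr (Finset.mul_mem_mul hc.1 hc.2))
    rcases h with h | h
    · calc ((↑(K₁ * K₂) : Set G))ᶜ.indicator (fun _ => (1:ℝ≥0∞)) (x * y) ≤ 1 :=
          Set.indicator_le_self' (fun _ _ => zero_le_one) _
      _ ≤ _ := le_add_right (le_of_eq (Set.indicator_of_mem (Set.mem_compl fun hx => h (Finset.mem_coe.mp hx)) (fun _ => (1:ℝ≥0∞))).symm)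
    · calc ((↑(K₁ * K₂) : Set G))ᶜ.indicator (fun _ => (1:ℝ≥0∞)) (x * y) ≤ 1 :=
          Set.indicator_le_self' (fun _ _ => zero_le_one) _
      _ ≤ _ := le_add_left (le_of_eq (Set.indicator_of_mem (Set.mem_compl fun hx => h (Finset.mem_coe.mp hx)) (fun _ => (1:ℝ≥0∞))).symm)

lemma ofReal_nML_mul (hμ : IsProb μ) (hl : IsProb lam) (x y : G) :
    ENNReal.ofReal (negMulLog (μ x * lam y)) =
      mE lam y * eE μ x + mE μ x * eE lam y := by
  rw [negMulLog_mul, ENNReal.ofReal_add (mul_nonneg (hl.1 _) (prob_nml_nonneg hμ _))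
    (mul_nonneg (hμ.1 _) (prob_nml_nonneg hl _)), ENNReal.ofReal_mul (hl.1 _),
    ENNReal.ofReal_mul (hμ.1 _)]
  rfl

lemma tailM_conv_le [DecidableEq G] (hμ : IsProb μ) (hl : IsProb lam) (K₁ K₂ : Finset G) :
    tailM (conv μ lam) (K₁ * K₂) ≤ tailM μ K₁ + tailM lam K₂ := by
  set χ : G → ℝ≥0∞ := ((↑(K₁ * K₂) : Set G))ᶜ.indicator (fun _ => 1) with hχ
  set χ₁ : G → ℝ≥0∞ := ((↑K₁ : Set G))ᶜ.indicator (fun _ => 1) with hχ₁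
  set χ₂ : G → ℝ≥0∞ := ((↑K₂ : Set G))ᶜ.indicator (fun _ => 1) with hχ₂
  calc tailM (conv μ lam) (K₁ * K₂) = ∑' z, χ z * mE (conv μ lam) z :=
        tsum_congr fun z => ind_mul _ _ z
  _ = ∑' z, χ z * ∑' x, mE μ x * mE lam (x⁻¹ * z) := by
        exact tsum_congr fun z => by rw [mE_conv hμ hl z]
  _ = ∑' p : G × G, χ (p.1 * p.2) * (mE μ p.1 * mE lam p.2) :=
        prod_expand (fun x y => mE μ x * mE lam y) χ
  _ ≤ ∑' p : G × G, ((χ₁ p.1 * mE μ p.1) * mE lam p.2 + mE μ p.1 * (χ₂ p.2 * mE lam p.2)) := by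
        refine ENNReal.tsum_le_tsum fun p => ?_
        calc χ (p.1 * p.2) * (mE μ p.1 * mE lam p.2)
            ≤ (χ₁ p.1 + χ₂ p.2) * (mE μ p.1 * mE lam p.2) :=
              mul_le_mul_left (chi_mul_le K₁ K₂ p.1 p.2) _
        _ = (χ₁ p.1 * mE μ p.1) * mE lam p.2 + mE μ p.1 * (χ₂ p.2 * mE lam p.2) := by ring
  _ = (∑' x, χ₁ x * mE μ x) * (∑' y, mE lam y)
        + (∑' x, mE μ x) * ∑' y, χ₂ y * mE lam y := by
        rw [ENNReal.tsum_add]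
        congr 1
        · exact tsum_prod_mul (fun x => χ₁ x * mE μ x) (fun y => mE lam y)
        · exact tsum_prod_mul (fun x => mE μ x) (fun y => χ₂ y * mE lam y)
  _ = tailM μ K₁ + tailM lam K₂ := by
        rw [prob_tsum_mE hμ, prob_tsum_mE hl, mul_one, one_mul]
        congr 1
        · exact (tsum_congr fun x => (ind_mul _ _ x).symm)
        · exact (tsum_congr fun y => (ind_mul _ _ y).symm)

lemma tailE_conv_le [DecidableEq G] (hμ : IsProb μ) (hl : IsProb lam) (K₁ K₂ : Finset G) :
    tailE (conv μ lam) (K₁ * K₂) ≤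
      (tailE μ K₁ + tailM μ K₁ * HE lam) + (tailE lam K₂ + tailM lam K₂ * HE μ) := by
  set χ : G → ℝ≥0∞ := ((↑(K₁ * K₂) : Set G))ᶜ.indicator (fun _ => 1) with hχ
  set χ₁ : G → ℝ≥0∞ := ((↑K₁ : Set G))ᶜ.indicator (fun _ => 1) with hχ₁
  set χ₂ : G → ℝ≥0∞ := ((↑K₂ : Set G))ᶜ.indicator (fun _ => 1) with hχ₂
  calc tailE (conv μ lam) (K₁ * K₂) = ∑' z, χ z * eE (conv μ lam) z :=
        tsum_congr fun z => ind_mul _ _ z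
  _ ≤ ∑' z, χ z * ∑' x, ENNReal.ofReal (negMulLog (μ x * lam (x⁻¹ * z))) :=
        ENNReal.tsum_le_tsum fun z => mul_le_mul_right (eE_conv_le hμ hl z) _
  _ = ∑' p : G × G, χ (p.1 * p.2) * ENNReal.ofReal (negMulLog (μ p.1 * lam p.2)) :=
        prod_expand (fun x y => ENNReal.ofReal (negMulLog (μ x * lam y))) χ
  _ ≤ ∑' p : G × G,
        (((χ₁ p.1 * eE μ p.1) * mE lam p.2 + (χ₁ p.1 * mE μ p.1) * eE lam p.2)
          + (eE μ p.1 * (χ₂ p.2 * mE lam p.2) + mE μ p.1 * (χ₂ p.2 * eE lam p.2))) := by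
        refine ENNReal.tsum_le_tsum fun p => ?_
        calc χ (p.1 * p.2) * ENNReal.ofReal (negMulLog (μ p.1 * lam p.2))
            ≤ (χ₁ p.1 + χ₂ p.2) * ENNReal.ofReal (negMulLog (μ p.1 * lam p.2)) :=
              mul_le_mul_left (chi_mul_le K₁ K₂ p.1 p.2) _
        _ = (χ₁ p.1 + χ₂ p.2) * (mE lam p.2 * eE μ p.1 + mE μ p.1 * eE lam p.2) := by
              rw [ofReal_nML_mul hμ hl]
        _ = ((χ₁ p.1 * eE μ p.1) * mE lam p.2 + (χ₁ p.1 * mE μ p.1) * eE lam p.2)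
              + (eE μ p.1 * (χ₂ p.2 * mE lam p.2) + mE μ p.1 * (χ₂ p.2 * eE lam p.2)) := by
              ring
  _ = ((∑' x, χ₁ x * eE μ x) * (∑' y, mE lam y)
        + (∑' x, χ₁ x * mE μ x) * (∑' y, eE lam y))
      + ((∑' x, eE μ x) * (∑' y, χ₂ y * mE lam y)
        + (∑' x, mE μ x) * (∑' y, χ₂ y * eE lam y)) := by
        rw [ENNReal.tsum_add, ENNReal.tsum_add, ENNReal.tsum_add]
        congr 1
        · congr 1
          · exact tsum_prod_mul (fun x => χ₁ x * eE μ x) (fun y => mE lam y)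
          · exact tsum_prod_mul (fun x => χ₁ x * mE μ x) (fun y => eE lam y)
        · congr 1
          · exact tsum_prod_mul (fun x => eE μ x) (fun y => χ₂ y * mE lam y)
          · exact tsum_prod_mul (fun x => mE μ x) (fun y => χ₂ y * eE lam y)
  _ = (tailE μ K₁ + tailM μ K₁ * HE lam) + (tailE lam K₂ + tailM lam K₂ * HE μ) := by
        rw [prob_tsum_mE hμ, prob_tsum_mE hl, mul_one, one_mul]
        have e1 : ∑' x, χ₁ x * eE μ x = tailE μ K₁ :=
          tsum_congr fun x => (ind_mul _ _ x).symm
        have e2 : ∑' x, χ₁ x * mE μ x = tailM μ K₁ :=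
          tsum_congr fun x => (ind_mul _ _ x).symm
        have e3 : ∑' y, χ₂ y * mE lam y = tailM lam K₂ :=
          tsum_congr fun y => (ind_mul _ _ y).symm
        have e4 : ∑' y, χ₂ y * eE lam y = tailE lam K₂ :=
          tsum_congr fun y => (ind_mul _ _ y).symm
        rw [e1, e2, e3, e4, show (∑' y, eE lam y) = HE lam from rfl,
          show (∑' x, eE μ x) = HE μ from rfl]
        ring

end AsympUSC

namespace AsympUSC

open scoped Pointwise

variable {G : Type*} [Group G] {μ lam ρ : G → ℝ}

lemma tailE_le_of_real (hμ : IsProb μ) (K : Finset G) (hfin : HE μ ≠ ∞) {ε : ℝ}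
    (h : (∑' x, ((↑K : Set G)ᶜ).indicator (fun y => negMulLog (μ y)) x) ≤ ε) :
    tailE μ K ≤ ENNReal.ofReal ε := by
  have hnn : ∀ x, 0 ≤ ((↑K : Set G)ᶜ).indicator (fun y => negMulLog (μ y)) x := fun x =>
    Set.indicator_nonneg (fun y _ => prob_nml_nonneg hμ y) x
  have hofr : ∀ x, ENNReal.ofReal (((↑K : Set G)ᶜ).indicator (fun y => negMulLog (μ y)) x)
      = ((↑K : Set G)ᶜ).indicator (eE μ) x := by
    intro x
    by_cases hx : x ∈ ((↑K : Set G))ᶜ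
    · rw [Set.indicator_of_mem hx, Set.indicator_of_mem hx]; rfl
    · rw [Set.indicator_of_notMem hx, Set.indicator_of_notMem hx, ENNReal.ofReal_zero]
  have hglue := tsum_toReal_ofReal
    (fun x => ((↑K : Set G)ᶜ).indicator (fun y => negMulLog (μ y)) x) hnn
  rw [tsum_congr hofr] at hglue
  have hne : tailE μ K ≠ ∞ := ne_top_of_le_ne_top hfin (tailE_le_HE μ K)
  have hval : (∑' x, ((↑K : Set G)ᶜ).indicator (fun y => negMulLog (μ y)) x)
      = (tailE μ K).toReal := hglue
  calc tailE μ K = ENNReal.ofReal ((tailE μ K).toReal) := (ENNReal.ofReal_toReal hne).symm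
  _ ≤ ENNReal.ofReal ε := ENNReal.ofReal_le_ofReal (hval ▸ h)

lemma tailM_le (hρ : IsProb ρ) (K : Finset G) {δ : ℝ} (h : 1 - δ ≤ ∑ x ∈ K, ρ x) :
    tailM ρ K ≤ ENNReal.ofReal δ := by
  have hsplit := (tsum_split (mE ρ) K).symm.trans (prob_tsum_mE hρ)
  have hKne : (∑ x ∈ K, mE ρ x) ≠ ∞ :=
    (ENNReal.sum_lt_top.2 fun a _ => ENNReal.ofReal_lt_top).ne
  have htne : tailM ρ K ≠ ∞ := by
    intro hc
    rw [show (∑' x, ((↑K : Set G)ᶜ).indicator (mE ρ) x) = tailM ρ K from rfl, hc] at hsplit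
    simp at hsplit
  have hKval : (∑ x ∈ K, mE ρ x).toReal = ∑ x ∈ K, ρ x := by
    rw [show (∑ x ∈ K, mE ρ x) = ∑ x ∈ K, ENNReal.ofReal (ρ x) from rfl,
      ENNReal.toReal_sum (fun x _ => ENNReal.ofReal_ne_top)]
    exact Finset.sum_congr rfl fun x _ => ENNReal.toReal_ofReal (hρ.1 x)
  have heq := congrArg ENNReal.toReal hsplit
  rw [show (∑' x, ((↑K : Set G)ᶜ).indicator (mE ρ) x) = tailM ρ K from rfl] at heq
  rw [ENNReal.toReal_add hKne htne, hKval, ENNReal.toReal_one] at heq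
  have hle : (tailM ρ K).toReal ≤ δ := by linarith
  calc tailM ρ K = ENNReal.ofReal ((tailM ρ K).toReal) := (ENNReal.ofReal_toReal htne).symm
  _ ≤ ENNReal.ofReal δ := ENNReal.ofReal_le_ofReal hle

lemma unif_tight [DecidableEq G] {μ : ℕ → G → ℝ} {ν : G → ℝ} (hp : ∀ i, IsProb (μ i)) (hν : IsProb ν)
    (hw : ∀ x, Tendsto (fun i => μ i x) atTop (nhds (ν x))) :
    ∀ δ > (0:ℝ), ∃ K : Finset G,
      (∀ i, tailM (μ i) K ≤ ENNReal.ofReal δ) ∧ tailM ν K ≤ ENNReal.ofReal δ := by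
  intro δ hδ
  have h1 : ∀ᶠ s : Finset G in atTop, 1 - δ/2 < ∑ x ∈ s, ν x :=
    hν.2.eventually (eventually_gt_nhds (by linarith))
  obtain ⟨K₀, hK₀⟩ := h1.exists
  have h2 : Tendsto (fun i => ∑ x ∈ K₀, μ i x) atTop (nhds (∑ x ∈ K₀, ν x)) :=
    tendsto_finset_sum _ fun x _ => hw x
  have h3 : ∀ᶠ i in atTop, 1 - δ < ∑ x ∈ K₀, μ i x :=
    h2.eventually (eventually_gt_nhds (by linarith))
  obtain ⟨I, hI⟩ := eventually_atTop.1 h3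
  have h4 : ∀ i, ∃ Ki : Finset G, 1 - δ < ∑ x ∈ Ki, μ i x := fun i =>
    ((hp i).2.eventually (eventually_gt_nhds (by linarith))).exists
  choose Ks hKs using h4
  set K : Finset G := K₀ ∪ (Finset.range I).biUnion Ks with hK
  refine ⟨K, fun i => ?_, ?_⟩
  · by_cases hi : I ≤ i
    · refine tailM_le (hp i) _ (le_trans (hI i hi).le ?_)
      exact Finset.sum_le_sum_of_subset_of_nonneg Finset.subset_union_left
        fun x _ _ => (hp i).1 x
    · refine tailM_le (hp i) _ (le_trans (hKs i).le ?_)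
      refine Finset.sum_le_sum_of_subset_of_nonneg ?_ fun x _ _ => (hp i).1 x
      exact le_trans (Finset.subset_biUnion_of_mem Ks (Finset.mem_range.2 (lt_of_not_ge hi)))
        Finset.subset_union_right
  · refine tailM_le hν _ (le_trans (by linarith [hK₀]) ?_)
    exact Finset.sum_le_sum_of_subset_of_nonneg Finset.subset_union_left
      fun x _ _ => hν.1 x

lemma HE_le_of_entTight {μ : ℕ → G → ℝ} (hp : ∀ i, IsProb (μ i)) (he : EntTight μ) :
    ∃ C : ℝ≥0∞, C ≠ ∞ ∧ ∀ i, HE (μ i) ≠ ∞ → HE (μ i) ≤ C := by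
  obtain ⟨K, hK⟩ := he 1 one_pos
  refine ⟨(K.card : ℝ≥0∞) * ENNReal.ofReal (exp (-1)) + ENNReal.ofReal 1,
    ENNReal.add_ne_top.2 ⟨ENNReal.mul_ne_top (ENNReal.natCast_ne_top _)
      ENNReal.ofReal_ne_top, ENNReal.ofReal_ne_top⟩, fun i hfin => ?_⟩
  rw [show HE (μ i) = ∑' x, eE (μ i) x from rfl, tsum_split (eE (μ i)) K]
  refine add_le_add ?_ (tailE_le_of_real (hp i) K hfin (hK i).le)
  have hb : ∀ x ∈ K, eE (μ i) x ≤ ENNReal.ofReal (exp (-1)) := fun x _ =>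
    ENNReal.ofReal_le_ofReal (negMulLog_le_exp_neg_one ((hp i).1 x))
  calc (∑ x ∈ K, eE (μ i) x) ≤ K.card • ENNReal.ofReal (exp (-1)) :=
        Finset.sum_le_card_nsmul K _ _ hb
  _ = (K.card : ℝ≥0∞) * ENNReal.ofReal (exp (-1)) := nsmul_eq_mul _ _

lemma HE_convPow_le [DecidableEq G] (hμ : IsProb μ) {C : ℝ≥0∞} (hC : HE μ ≤ C) (n : ℕ) :
    HE (convPow μ n) ≤ (n : ℝ≥0∞) * C := by
  induction n with
  | zero => rw [HE_delta]; exact zero_le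
  | succ n IH =>
    calc HE (convPow μ (n+1)) ≤ HE μ + HE (convPow μ n) :=
          HE_conv_le hμ (convPow_isProb hμ n)
    _ ≤ C + (n : ℝ≥0∞) * C := add_le_add hC IH
    _ = ((n+1 : ℕ) : ℝ≥0∞) * C := by push_cast; ring

lemma tailE_anti (μ : G → ℝ) (hnn : ∀ x, (0:ℝ≥0∞) ≤ eE μ x) {K K' : Finset G} (h : K ⊆ K') :
    tailE μ K' ≤ tailE μ K := by
  refine ENNReal.tsum_le_tsum fun x => ?_
  exact Set.indicator_le_indicator_of_subset
    (Set.compl_subset_compl.2 (by exact_mod_cast Finset.coe_subset.2 h)) (fun a => zero_le) x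

lemma tailM_anti (μ : G → ℝ) {K K' : Finset G} (h : K ⊆ K') : tailM μ K' ≤ tailM μ K := by
  refine ENNReal.tsum_le_tsum fun x => ?_
  exact Set.indicator_le_indicator_of_subset
    (Set.compl_subset_compl.2 (by exact_mod_cast Finset.coe_subset.2 h)) (fun a => zero_le) x

lemma eE_delta [DecidableEq G] (x : G) : eE (convPow μ 0) x = 0 := by
  show ENNReal.ofReal (negMulLog (convPow μ 0 x)) = 0
  by_cases h : x = 1 <;> simp [convPow, h]

lemma mE_delta [DecidableEq G] {x : G} (h : x ≠ 1) : mE (convPow μ 0) x = 0 := by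
  show ENNReal.ofReal (convPow μ 0 x) = 0
  simp [convPow, h]

end AsympUSC

namespace AsympUSC

open scoped Pointwise

variable {G : Type*} [Group G] [DecidableEq G] {μ : ℕ → G → ℝ} {ν : G → ℝ}

lemma level_tailM (hp : ∀ i, IsProb (μ i)) (hν : IsProb ν)
    (hw : ∀ x, Tendsto (fun i => μ i x) atTop (nhds (ν x))) :
    ∀ N : ℕ, ∀ δ > (0:ℝ), ∃ K : Finset G, ∀ i,
      tailM (convPow (μ i) N) K ≤ ENNReal.ofReal δ := by
  intro N
  induction N with
  | zero =>
    intro δ hδ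
    refine ⟨{1}, fun i => ?_⟩
    have hz : ∀ x, ((↑({1} : Finset G) : Set G))ᶜ.indicator (mE (convPow (μ i) 0)) x = 0 := by
      intro x
      by_cases hx : x ∈ ((↑({1} : Finset G) : Set G))ᶜ
      · rw [Set.indicator_of_mem hx, mE_delta (by simpa using hx)]
      · rw [Set.indicator_of_notMem hx]
    calc tailM (convPow (μ i) 0) {1} = ∑' x, (0:ℝ≥0∞) := tsum_congr hz
    _ = 0 := tsum_zero
    _ ≤ _ := zero_le
  | succ N IH =>
    intro δ hδ
    obtain ⟨K₁, hK₁, _⟩ := unif_tight hp hν hw (δ/2) (by linarith)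
    obtain ⟨K₂, hK₂⟩ := IH (δ/2) (by linarith)
    refine ⟨K₁ * K₂, fun i => ?_⟩
    calc tailM (convPow (μ i) (N+1)) (K₁ * K₂)
        ≤ tailM (μ i) K₁ + tailM (convPow (μ i) N) K₂ :=
          tailM_conv_le (hp i) (convPow_isProb (hp i) N) K₁ K₂
    _ ≤ ENNReal.ofReal (δ/2) + ENNReal.ofReal (δ/2) := add_le_add (hK₁ i) (hK₂ i)
    _ = ENNReal.ofReal δ := by
          rw [← ENNReal.ofReal_add (by linarith) (by linarith)]
          norm_num

lemma level_tailE (hp : ∀ i, IsProb (μ i)) (hν : IsProb ν)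
    (hw : ∀ x, Tendsto (fun i => μ i x) atTop (nhds (ν x))) (he : EntTight μ) :
    ∀ N : ℕ, ∀ ε > (0:ℝ), ∃ K : Finset G, ∀ i, HE (μ i) ≠ ∞ →
      tailE (convPow (μ i) N) K ≤ ENNReal.ofReal ε := by
  obtain ⟨C, hCne, hC⟩ := HE_le_of_entTight hp he
  intro N
  induction N with
  | zero =>
    intro ε hε
    refine ⟨{1}, fun i _ => ?_⟩
    calc tailE (convPow (μ i) 0) {1} ≤ HE (convPow (μ i) 0) := tailE_le_HE _ _
    _ = 0 := HE_delta
    _ ≤ _ := zero_le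
  | succ N IH =>
    intro ε hε
    -- uniform bound on entropies, as a real number
    set M : ℝ≥0∞ := ((N:ℝ≥0∞) + 1) * C with hM
    have hMne : M ≠ ∞ := ENNReal.mul_ne_top (ENNReal.add_ne_top.2
      ⟨ENNReal.natCast_ne_top _, ENNReal.one_ne_top⟩) hCne
    set r : ℝ := M.toReal + 1 with hr
    have hrpos : 0 < r := by positivity
    have hMler : M ≤ ENNReal.ofReal r := by
      rw [hr, ← ENNReal.ofReal_toReal hMne]
      exact ENNReal.ofReal_le_ofReal (by
        rw [ENNReal.toReal_ofReal ENNReal.toReal_nonneg]; linarith)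
    have hHEμ : ∀ i, HE (μ i) ≠ ∞ → HE (μ i) ≤ ENNReal.ofReal r := fun i hi =>
      le_trans (hC i hi) (le_trans (le_trans (le_mul_of_one_le_left (zero_le)
        (by simp)) le_rfl) hMler)
    have hHEρ : ∀ i, HE (μ i) ≠ ∞ → HE (convPow (μ i) N) ≤ ENNReal.ofReal r := by
      intro i hi
      refine le_trans (HE_convPow_le (hp i) (hC i hi) N) (le_trans ?_ hMler)
      exact mul_le_mul_left (by
        exact le_trans (le_add_of_nonneg_right zero_le_one) le_rfl) C
    set δ : ℝ := ε / (4 * r) with hδdef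
    have hδ : 0 < δ := by positivity
    have hδr : δ * r ≤ ε / 4 := by
      rw [hδdef]
      rw [div_mul_eq_mul_div, mul_comm]
      rw [div_le_div_iff₀ (by positivity) (by norm_num)]
      ring_nf
      nlinarith [hrpos]
    -- pieces
    obtain ⟨K₁e, hK₁e⟩ := he (ε/4) (by linarith)
    obtain ⟨K₁m, hK₁m, _⟩ := unif_tight hp hν hw δ hδ
    obtain ⟨K₂e, hK₂e⟩ := IH (ε/4) (by linarith)
    obtain ⟨K₂m, hK₂m⟩ := level_tailM hp hν hw N δ hδ
    refine ⟨(K₁e ∪ K₁m) * (K₂e ∪ K₂m), fun i hi => ?_⟩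
    have t1 : tailE (μ i) (K₁e ∪ K₁m) ≤ ENNReal.ofReal (ε/4) :=
      le_trans (tailE_anti (μ i) (fun x => zero_le) Finset.subset_union_left)
        (tailE_le_of_real (hp i) K₁e hi (hK₁e i).le)
    have t2 : tailM (μ i) (K₁e ∪ K₁m) ≤ ENNReal.ofReal δ :=
      le_trans (tailM_anti (μ i) Finset.subset_union_right) (hK₁m i)
    have t3 : tailE (convPow (μ i) N) (K₂e ∪ K₂m) ≤ ENNReal.ofReal (ε/4) := by
      obtain ⟨K', hK'⟩ := IH (ε/4) (by linarith)
      exact le_trans (tailE_anti _ (fun x => zero_le) Finset.subset_union_left)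
        (hK₂e i hi)
    have t4 : tailM (convPow (μ i) N) (K₂e ∪ K₂m) ≤ ENNReal.ofReal δ :=
      le_trans (tailM_anti _ Finset.subset_union_right) (hK₂m i)
    have hmul : ∀ t : ℝ≥0∞, t ≤ ENNReal.ofReal δ → ∀ H : ℝ≥0∞, H ≤ ENNReal.ofReal r →
        t * H ≤ ENNReal.ofReal (ε/4) := by
      intro t ht H hH
      calc t * H ≤ ENNReal.ofReal δ * ENNReal.ofReal r := mul_le_mul' ht hH
      _ = ENNReal.ofReal (δ * r) := (ENNReal.ofReal_mul hδ.le).symm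
      _ ≤ ENNReal.ofReal (ε/4) := ENNReal.ofReal_le_ofReal hδr
    calc tailE (convPow (μ i) (N+1)) ((K₁e ∪ K₁m) * (K₂e ∪ K₂m))
        ≤ (tailE (μ i) (K₁e ∪ K₁m) + tailM (μ i) (K₁e ∪ K₁m) * HE (convPow (μ i) N))
          + (tailE (convPow (μ i) N) (K₂e ∪ K₂m)
            + tailM (convPow (μ i) N) (K₂e ∪ K₂m) * HE (μ i)) :=
          tailE_conv_le (hp i) (convPow_isProb (hp i) N) _ _
    _ ≤ (ENNReal.ofReal (ε/4) + ENNReal.ofReal (ε/4))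
          + (ENNReal.ofReal (ε/4) + ENNReal.ofReal (ε/4)) := by
          refine add_le_add (add_le_add t1 (hmul _ t2 _ (hHEρ i hi)))
            (add_le_add t3 (hmul _ t4 _ (hHEμ i hi)))
    _ = ENNReal.ofReal ε := by
          rw [← ENNReal.ofReal_add (by linarith) (by linarith),
            ← ENNReal.ofReal_add (by linarith) (by linarith)]
          congr 1
          ring

end AsympUSC

namespace AsympUSC

variable {G : Type*} [Group G] {μ : ℕ → G → ℝ} {ν : G → ℝ}

lemma real_tailM_le {ρ : G → ℝ} (hρ : IsProb ρ) {K : Finset G} {δ : ℝ}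
    (h : tailM ρ K ≤ ENNReal.ofReal δ) :
    ∑' x, ((↑K : Set G)ᶜ).indicator ρ x ≤ δ ∨ δ < 0 := by
  by_cases hδ : 0 ≤ δ
  · left
    have hnn : ∀ x, 0 ≤ ((↑K : Set G)ᶜ).indicator ρ x := fun x =>
      Set.indicator_nonneg (fun y _ => hρ.1 y) x
    have hofr : ∀ x, ENNReal.ofReal (((↑K : Set G)ᶜ).indicator ρ x)
        = ((↑K : Set G)ᶜ).indicator (mE ρ) x := by
      intro x
      by_cases hx : x ∈ ((↑K : Set G))ᶜ
      · rw [Set.indicator_of_mem hx, Set.indicator_of_mem hx]; rfl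
      · rw [Set.indicator_of_notMem hx, Set.indicator_of_notMem hx, ENNReal.ofReal_zero]
    have hglue := tsum_toReal_ofReal (fun x => ((↑K : Set G)ᶜ).indicator ρ x) hnn
    rw [tsum_congr hofr] at hglue
    rw [hglue]
    calc (tailM ρ K).toReal ≤ (ENNReal.ofReal δ).toReal :=
          ENNReal.toReal_mono ENNReal.ofReal_ne_top h
    _ = δ := ENNReal.toReal_ofReal hδ
  · right; linarith [not_le.mp hδ]

lemma conv_diff_le {μ' lam' ν' l' : G → ℝ} (h1 : IsProb μ') (h2 : IsProb lam')
    (h3 : IsProb ν') (h4 : IsProb l') (z : G) (F : Finset G) :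
    |conv μ' lam' z - conv ν' l' z| ≤
      (∑ x ∈ F, |μ' x * lam' (x⁻¹ * z) - ν' x * l' (x⁻¹ * z)|)
      + ((∑' x, ((↑F : Set G)ᶜ).indicator μ' x) + ∑' x, ((↑F : Set G)ᶜ).indicator ν' x) := by
  have hs1 := conv_slice_summable h1 h2 z
  have hs2 := conv_slice_summable h3 h4 z
  set D : G → ℝ := fun x => μ' x * lam' (x⁻¹ * z) - ν' x * l' (x⁻¹ * z) with hD
  have hDs : Summable D := hs1.sub hs2
  have habs : Summable fun x => |D x| := hDs.abs
  have h0 : conv μ' lam' z - conv ν' l' z = ∑' x, D x := (Summable.tsum_sub hs1 hs2).symm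
  have hptw : ∀ x : G, |D x| ≤ μ' x + ν' x := by
    intro x
    have hb : |μ' x * lam' (x⁻¹ * z)| + |ν' x * l' (x⁻¹ * z)| ≤ μ' x + ν' x := by
      rw [abs_of_nonneg (mul_nonneg (h1.1 x) (h2.1 _)),
        abs_of_nonneg (mul_nonneg (h3.1 x) (h4.1 _))]
      exact add_le_add (mul_le_of_le_one_right (h1.1 x) (prob_le_one h2 _))
        (mul_le_of_le_one_right (h3.1 x) (prob_le_one h4 _))
    exact le_trans (abs_sub _ _) hb
  calc |conv μ' lam' z - conv ν' l' z| = |∑' x, D x| := by rw [h0]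
  _ ≤ ∑' x, |D x| := by
      have := norm_tsum_le_tsum_norm (f := D) (by simpa using habs)
      simpa using this
  _ = (∑ x ∈ F, |D x|) + ∑' x : ((↑F : Set G)ᶜ : Set G), |D x| :=
      (Summable.sum_add_tsum_compl (s := F) habs).symm
  _ ≤ (∑ x ∈ F, |D x|) + ∑' x : ((↑F : Set G)ᶜ : Set G), (μ' x + ν' x) := by
      refine add_le_add_right ?_ _
      exact Summable.tsum_le_tsum (fun x => hptw x) (habs.subtype _)
        (((prob_summable h1).add (prob_summable h3)).subtype _)
  _ = (∑ x ∈ F, |D x|)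
      + ((∑' x, ((↑F : Set G)ᶜ).indicator μ' x) + ∑' x, ((↑F : Set G)ᶜ).indicator ν' x) := by
      congr 1
      have ha := Summable.tsum_add (f := fun x : (((↑F : Set G)ᶜ) : Set G) => μ' (↑x : G))
        (g := fun x : (((↑F : Set G)ᶜ) : Set G) => ν' (↑x : G))
        ((prob_summable h1).subtype _) ((prob_summable h3).subtype _)
      rw [ha]
      congr 1
      · exact tsum_subtype _ μ'
      · exact tsum_subtype _ ν'

lemma conv_tendsto [DecidableEq G] (hp : ∀ i, IsProb (μ i)) (hν : IsProb ν)
    (hw : ∀ x, Tendsto (fun i => μ i x) atTop (nhds (ν x)))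
    {lam : ℕ → G → ℝ} {l : G → ℝ} (hpl : ∀ i, IsProb (lam i)) (hl : IsProb l)
    (hwl : ∀ x, Tendsto (fun i => lam i x) atTop (nhds (l x))) (z : G) :
    Tendsto (fun i => conv (μ i) (lam i) z) atTop (nhds (conv ν l z)) := by
  rw [Metric.tendsto_atTop]
  intro ε hε
  obtain ⟨F, hF, hFν⟩ := unif_tight hp hν hw (ε/4) (by linarith)
  have hFr : ∀ i, ∑' x, ((↑F : Set G)ᶜ).indicator (μ i) x ≤ ε/4 := fun i =>
    (real_tailM_le (hp i) (hF i)).resolve_right (by linarith)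
  have hFνr : ∑' x, ((↑F : Set G)ᶜ).indicator ν x ≤ ε/4 :=
    (real_tailM_le hν hFν).resolve_right (by linarith)
  have hsum : Tendsto
      (fun i => ∑ x ∈ F, |μ i x * lam i (x⁻¹ * z) - ν x * l (x⁻¹ * z)|) atTop (nhds 0) := by
    have hterm : ∀ x ∈ F, Tendsto
        (fun i => |μ i x * lam i (x⁻¹ * z) - ν x * l (x⁻¹ * z)|) atTop (nhds 0) := by
      intro x _
      have : Tendsto (fun i => μ i x * lam i (x⁻¹ * z) - ν x * l (x⁻¹ * z)) atTop
          (nhds (ν x * l (x⁻¹ * z) - ν x * l (x⁻¹ * z))) :=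
        ((hw x).mul (hwl (x⁻¹ * z))).sub tendsto_const_nhds
      rw [sub_self] at this
      simpa using this.abs
    simpa using tendsto_finset_sum F hterm
  have hev : ∀ᶠ i in atTop,
      (∑ x ∈ F, |μ i x * lam i (x⁻¹ * z) - ν x * l (x⁻¹ * z)|) < ε/4 :=
    hsum.eventually (eventually_lt_nhds (by linarith))
  obtain ⟨I, hI⟩ := eventually_atTop.1 hev
  refine ⟨I, fun i hi => ?_⟩
  rw [Real.dist_eq]
  calc |conv (μ i) (lam i) z - conv ν l z| ≤
      (∑ x ∈ F, |μ i x * lam i (x⁻¹ * z) - ν x * l (x⁻¹ * z)|)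
      + ((∑' x, ((↑F : Set G)ᶜ).indicator (μ i) x) + ∑' x, ((↑F : Set G)ᶜ).indicator ν x) :=
      conv_diff_le (hp i) (hpl i) hν hl z F
  _ < ε/4 + (ε/4 + ε/4) := by
      have := hI i hi
      have h2 := hFr i
      have h3 := hFνr
      refine add_lt_add_of_lt_of_le this (add_le_add h2 h3)
  _ < ε := by linarith

lemma convPow_tendsto [DecidableEq G] (hp : ∀ i, IsProb (μ i)) (hν : IsProb ν)
    (hw : ∀ x, Tendsto (fun i => μ i x) atTop (nhds (ν x))) (N : ℕ) (z : G) :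
    Tendsto (fun i => convPow (μ i) N z) atTop (nhds (convPow ν N z)) := by
  induction N generalizing z with
  | zero => exact tendsto_const_nhds
  | succ N IH =>
    exact conv_tendsto hp hν hw (fun i => convPow_isProb (hp i) N)
      (convPow_isProb hν N) (fun x => IH x) z

lemma le_of_freq_tendsto {u : ℕ → ℝ} {a B : ℝ} (h : Tendsto u atTop (nhds a))
    (hf : ∃ᶠ i in atTop, u i ≤ B) : a ≤ B := by
  by_contra hc
  push_neg at hc
  have hev := h.eventually (eventually_gt_nhds hc)
  obtain ⟨i, hi1, hi2⟩ := (hf.and_eventually hev).exists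
  exact absurd hi1 (not_le.mpr hi2)

lemma HE_nu_ne_top [DecidableEq G] (hp : ∀ i, IsProb (μ i)) (hν : IsProb ν)
    (hw : ∀ x, Tendsto (fun i => μ i x) atTop (nhds (ν x))) (he : EntTight μ)
    (hfreq : ∃ᶠ i in atTop, HE (μ i) ≠ ∞) : HE ν ≠ ∞ := by
  obtain ⟨K, hK⟩ := he 1 one_pos
  set B : ℝ := K.card * exp (-1) + 1 with hB
  have hbound : ∀ F : Finset G, ∑ x ∈ F, negMulLog (ν x) ≤ B := by
    intro F
    have htend : Tendsto (fun i => ∑ x ∈ F, negMulLog (μ i x)) atTop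
        (nhds (∑ x ∈ F, negMulLog (ν x))) := by
      refine tendsto_finset_sum F fun x _ => ?_
      exact (Real.continuous_negMulLog.continuousAt).tendsto.comp (hw x)
    refine le_of_freq_tendsto htend (hfreq.mono fun i hi => ?_)
    have hsummable : Summable fun x => negMulLog (μ i x) :=
      (summable_negMulLog_iff (hp i)).2 hi
    have hsplitF : ∑ x ∈ F, negMulLog (μ i x) =
        (∑ x ∈ F ∩ K, negMulLog (μ i x)) + ∑ x ∈ F \ K, negMulLog (μ i x) :=
      (Finset.sum_inter_add_sum_sdiff F K _).symm
    have h1 : ∑ x ∈ F ∩ K, negMulLog (μ i x) ≤ K.card * exp (-1) := by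
      calc ∑ x ∈ F ∩ K, negMulLog (μ i x) ≤ ∑ x ∈ K, negMulLog (μ i x) := by
            refine Finset.sum_le_sum_of_subset_of_nonneg (Finset.inter_subset_right)
              fun x _ _ => prob_nml_nonneg (hp i) x
      _ ≤ ∑ _x ∈ K, exp (-1) :=
            Finset.sum_le_sum fun x _ => negMulLog_le_exp_neg_one ((hp i).1 x)
      _ = K.card * exp (-1) := by rw [Finset.sum_const, nsmul_eq_mul]
    have h2 : ∑ x ∈ F \ K, negMulLog (μ i x) ≤ 1 := by
      have heq : ∑ x ∈ F \ K, negMulLog (μ i x) =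
          ∑ x ∈ F \ K, ((↑K : Set G)ᶜ).indicator (fun y => negMulLog (μ i y)) x := by
        refine Finset.sum_congr rfl fun x hx => ?_
        rw [Set.indicator_of_mem (by simpa using (Finset.mem_sdiff.1 hx).2)]
      rw [heq]
      refine le_trans (Summable.sum_le_tsum _ (fun x _ => Set.indicator_nonneg
        (fun y _ => prob_nml_nonneg (hp i) y) x) (hsummable.indicator _)) (hK i).le
    linarith
  have hsup : HE ν ≤ ENNReal.ofReal B := by
    rw [show HE ν = ∑' x, eE ν x from rfl, ENNReal.tsum_eq_iSup_sum]
    refine iSup_le fun F => ?_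
    have : (∑ x ∈ F, eE ν x) = ENNReal.ofReal (∑ x ∈ F, negMulLog (ν x)) := by
      rw [ENNReal.ofReal_sum_of_nonneg fun x _ => prob_nml_nonneg hν x]
      rfl
    rw [this]
    exact ENNReal.ofReal_le_ofReal (hbound F)
  exact ne_top_of_le_ne_top ENNReal.ofReal_ne_top hsup

end AsympUSC

open AsympUSC in
/-- Upper semi-continuity of asymptotic entropy: if probability measures `μᵢ` on a
countable group converge pointwise to `ν` and the family is entropy-tight, then
`limsup_i h(μᵢ) ≤ h(ν)`. -/
theorem asympEnt_usc {G : Type*} [Group G] [Countable G] [DecidableEq G]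
    (μ : ℕ → G → ℝ) (ν : G → ℝ)
    (hp : ∀ i, IsProb (μ i)) (hν : IsProb ν)
    (hw : ∀ x, Tendsto (fun i => μ i x) atTop (nhds (ν x)))
    (he : EntTight μ) :
    limsup (fun i => asympEnt (μ i)) atTop ≤ asympEnt ν := by
  by_cases hS : ∀ᶠ i in atTop, HE (μ i) = ∞
  · have h0 : ∀ᶠ i in atTop, asympEnt (μ i) = (0:ℝ) :=
      hS.mono fun i hi => asympEnt_eq_zero_of_top (hp i) hi
    have hcongr : limsup (fun i => asympEnt (μ i)) atTop = limsup (fun _ : ℕ => (0:ℝ)) atTop :=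
      limsup_congr h0
    rw [hcongr, limsup_const]
    exact asympEnt_nonneg hν
  · have hfreq : ∃ᶠ i in atTop, HE (μ i) ≠ ∞ := by
      rwa [Filter.not_eventually] at hS
    have hνfin : HE ν ≠ ∞ := HE_nu_ne_top hp hν hw he hfreq
    obtain ⟨hνlim, -⟩ := fekete hν hνfin
    refine ge_of_tendsto hνlim ?_
    filter_upwards [eventually_ge_atTop 1] with N hN
    set c := entropy (convPow ν N) / (N:ℝ) with hc
    have hNne : N ≠ 0 := by omega
    have hNpos : (0:ℝ) < N := by exact_mod_cast Nat.pos_of_ne_zero hNne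
    have hcnn : 0 ≤ c :=
      div_nonneg (entropy_nonneg (convPow_isProb hν N)) (Nat.cast_nonneg N)
    have hstep : ∀ δ > (0:ℝ), ∀ᶠ i in atTop, asympEnt (μ i) ≤ c + δ := by
      intro δ hδ
      obtain ⟨K, hK⟩ := level_tailE hp hν hw he N (δ/2) (by linarith)
      have htendK : Tendsto (fun i => ∑ x ∈ K, negMulLog (convPow (μ i) N x)) atTop
          (nhds (∑ x ∈ K, negMulLog (convPow ν N x))) := by
        refine tendsto_finset_sum K fun x _ => ?_
        exact (Real.continuous_negMulLog.continuousAt).tendsto.comp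
          (convPow_tendsto hp hν hw N x)
      have hev : ∀ᶠ i in atTop, ∑ x ∈ K, negMulLog (convPow (μ i) N x)
          < (∑ x ∈ K, negMulLog (convPow ν N x)) + δ/2 :=
        htendK.eventually (eventually_lt_nhds (by linarith))
      filter_upwards [hev] with i hi
      by_cases hfin : HE (μ i) = ∞
      · rw [asympEnt_eq_zero_of_top (hp i) hfin]
        linarith
      · refine le_trans (asympEnt_le_div (hp i) hNne) ?_
        have hentb : entropy (convPow (μ i) N) ≤ entropy (convPow ν N) + δ := by
          have hEsplit : HE (convPow (μ i) N) = (∑ x ∈ K, eE (convPow (μ i) N) x)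
              + tailE (convPow (μ i) N) K := tsum_split _ K
          have htail := hK i hfin
          have htailne : tailE (convPow (μ i) N) K ≠ ∞ :=
            ne_top_of_le_ne_top ENNReal.ofReal_ne_top htail
          have hKne : (∑ x ∈ K, eE (convPow (μ i) N) x) ≠ ∞ :=
            (ENNReal.sum_lt_top.2 fun a _ => ENNReal.ofReal_lt_top).ne
          have hsplit : entropy (convPow (μ i) N) = (∑ x ∈ K, eE (convPow (μ i) N) x).toReal
              + (tailE (convPow (μ i) N) K).toReal := by
            rw [entropy_eq_toReal (convPow_isProb (hp i) N), hEsplit,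
              ENNReal.toReal_add hKne htailne]
          have hsumval : (∑ x ∈ K, eE (convPow (μ i) N) x).toReal
              = ∑ x ∈ K, negMulLog (convPow (μ i) N x) := by
            rw [show (∑ x ∈ K, eE (convPow (μ i) N) x)
              = ∑ x ∈ K, ENNReal.ofReal (negMulLog (convPow (μ i) N x)) from rfl,
              ENNReal.toReal_sum (fun x _ => ENNReal.ofReal_ne_top)]
            exact Finset.sum_congr rfl fun x _ => ENNReal.toReal_ofReal
              (prob_nml_nonneg (convPow_isProb (hp i) N) x)
          have htailval : (tailE (convPow (μ i) N) K).toReal ≤ δ/2 := by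
            calc (tailE (convPow (μ i) N) K).toReal
                ≤ (ENNReal.ofReal (δ/2)).toReal :=
                  ENNReal.toReal_mono ENNReal.ofReal_ne_top htail
            _ = δ/2 := ENNReal.toReal_ofReal (by linarith)
          have hKν : ∑ x ∈ K, negMulLog (convPow ν N x) ≤ entropy (convPow ν N) := by
            rw [entropy]
            refine Summable.sum_le_tsum K (fun x _ => prob_nml_nonneg (convPow_isProb hν N) x) ?_
            exact (summable_negMulLog_iff (convPow_isProb hν N)).2
              (HE_convPow_ne_top hν hνfin N)
          rw [hsplit, hsumval]
          linarith
        calc entropy (convPow (μ i) N) / (N:ℝ) ≤ (entropy (convPow ν N) + δ) / N := by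
              gcongr
        _ = entropy (convPow ν N) / N + δ / N := add_div _ _ _
        _ ≤ c + δ := by
              have hdd : δ / N ≤ δ := by
                refine div_le_self hδ.le ?_
                exact_mod_cast hN
              rw [hc]
              linarith
    have hco : IsCoboundedUnder (· ≤ ·) atTop fun i => asympEnt (μ i) :=
      isCoboundedUnder_le_of_eventually_le atTop (x := 0)
        (Eventually.of_forall fun i => asympEnt_nonneg (hp i))
    have hfin2 : ∀ δ > (0:ℝ), limsup (fun i => asympEnt (μ i)) atTop ≤ c + δ := fun δ hδ =>
      limsup_le_of_le hco (hstep δ hδ)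
    exact le_of_forall_pos_le_add hfin2
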